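/- Let ω > 0, k ≥ 0 and M ≥ 0. Let Λ : [0,∞) → [0,∞) be absolutely continuous on every compact subinterval of [0,∞), and let h : [0,∞) → [0,∞) be measurable with ∫_0^∞ h(τ)² dτ ≤ M. If Λ'(t) + ωΛ(t) ≤ h(t)Λ(t) + k for almost every t ≥ 0, then for all t ≥ 0 one has Λ(t) ≤ Λ(0) e^{M/(2ω)} e^{−ωt/2} + (2k/ω) e^{M/(2ω)}. -/

import Mathlib

open MeasureTheory

section GronwallAux

open Set Filter Topology

lemma fub' {t : ℝ} {f g : ℝ → ℝ} (hf : Integrable f (volume : Measure ℝ))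
    (hg : Integrable g (volume : Measure ℝ)) :
    (∫ r in Ioc (0:ℝ) t, f r) * (∫ s in Ioc (0:ℝ) t, g s)
      = (∫ s in Ioc (0:ℝ) t, f s * ∫ r in Ioc (0:ℝ) s, g r)
        + (∫ s in Ioc (0:ℝ) t, g s * ∫ r in Ioc (0:ℝ) s, f r) := by
  rcases le_or_gt t 0 with ht | ht
  · rw [Ioc_eq_empty (not_lt.mpr ht)]
    simp
  have mI : MeasurableSet (Ioc (0:ℝ) t) := measurableSet_Ioc
  set μ : Measure ℝ := volume.restrict (Ioc (0:ℝ) t) with hμ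
  have mS : MeasurableSet {p : ℝ × ℝ | p.1 < p.2} :=
    measurableSet_lt measurable_fst measurable_snd
  set F : ℝ × ℝ → ℝ := ({p : ℝ × ℝ | p.1 < p.2}).indicator (fun p => g p.1 * f p.2) with hFdef
  have hFint : Integrable F (μ.prod μ) :=
    (((hg.restrict (s := Ioc 0 t)).mul_prod (hf.restrict (s := Ioc 0 t)))).indicator mS
  -- primitive of f is continuous, hence AE strongly measurable
  have hprimf : ContinuousOn (fun s => ∫ r in Ioc (0:ℝ) s, f r) (Icc (0:ℝ) t) :=
    intervalIntegral.continuousOn_primitive hf.integrableOn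
  have haesmf : AEStronglyMeasurable (fun s => ∫ r in Ioc (0:ℝ) s, f r) μ :=
    (hprimf.aestronglyMeasurable measurableSet_Icc).mono_measure
      (Measure.restrict_mono Ioc_subset_Icc_self le_rfl)
  have hbf : ∀ s : ℝ, ‖∫ r in Ioc (0:ℝ) s, f r‖ ≤ ∫ r, ‖f r‖ := by
    intro s
    refine (norm_integral_le_integral_norm _).trans ?_
    exact setIntegral_le_integral hf.norm (Filter.Eventually.of_forall fun r => norm_nonneg _)
  have h1 : Integrable (fun s => g s * ∫ r in Ioc (0:ℝ) s, f r) μ := by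
    have := Integrable.bdd_mul (hg.restrict (s := Ioc 0 t)) haesmf (Filter.Eventually.of_forall hbf)
    exact this.congr (Filter.Eventually.of_forall fun s => mul_comm _ _)
  have key : ∀ s ∈ Ioc (0:ℝ) t, g s * (∫ r in Ioc (0:ℝ) t, f r)
      = g s * (∫ r in Ioc (0:ℝ) s, f r) + ∫ r, F (s, r) ∂μ := by
    intro s hs
    have hsplit : ∫ r in Ioc (0:ℝ) t, f r
        = (∫ r in Ioc (0:ℝ) s, f r) + ∫ r in Ioc s t, f r := by
      rw [← setIntegral_union (Ioc_disjoint_Ioc_of_le le_rfl) measurableSet_Ioc hf.integrableOn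
        hf.integrableOn, Ioc_union_Ioc_eq_Ioc hs.1.le hs.2]
    have hinner : ∫ r, F (s, r) ∂μ = g s * ∫ r in Ioc s t, f r := by
      have hre : (fun r => F (s, r)) = (Ioi s).indicator (fun r => g s * f r) := by
        ext r
        by_cases hr : s < r
        · simp [hFdef, indicator_of_mem, Set.mem_setOf_eq, Set.mem_Ioi, hr]
        · simp [hFdef, indicator_of_notMem, Set.mem_setOf_eq, Set.mem_Ioi, hr]
      rw [hre, hμ, integral_indicator measurableSet_Ioi,
        Measure.restrict_restrict measurableSet_Ioi]
      have hset : Ioi s ∩ Ioc 0 t = Ioc s t := by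
        ext r
        simp only [mem_inter_iff, mem_Ioi, mem_Ioc]
        constructor
        · rintro ⟨h1, _, h3⟩; exact ⟨h1, h3⟩
        · rintro ⟨h1, h2⟩; exact ⟨h1, hs.1.trans h1, h2⟩
      rw [hset, integral_const_mul]
    rw [hsplit, mul_add, hinner]
  calc (∫ r in Ioc (0:ℝ) t, f r) * (∫ s in Ioc (0:ℝ) t, g s)
      = ∫ s, g s * (∫ r in Ioc (0:ℝ) t, f r) ∂μ := by
        rw [integral_mul_const]; ring
    _ = ∫ s, (g s * (∫ r in Ioc (0:ℝ) s, f r) + ∫ r, F (s, r) ∂μ) ∂μ := by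
        refine setIntegral_congr_fun mI ?_
        intro s hs
        exact key s hs
    _ = (∫ s, g s * (∫ r in Ioc (0:ℝ) s, f r) ∂μ) + ∫ s, (∫ r, F (s, r) ∂μ) ∂μ :=
        integral_add h1 hFint.integral_prod_left
    _ = (∫ s, g s * (∫ r in Ioc (0:ℝ) s, f r) ∂μ) + ∫ r, (∫ s, F (s, r) ∂μ) ∂μ := by
        rw [integral_integral_swap (f := fun s r => F (s, r)) hFint]
    _ = (∫ s, g s * (∫ r in Ioc (0:ℝ) s, f r) ∂μ)
        + ∫ r, f r * (∫ s in Ioc (0:ℝ) r, g s) ∂μ := by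
        congr 1
        refine setIntegral_congr_fun mI ?_
        intro r hr
        dsimp only
        have hre : (fun s => F (s, r)) = (Iio r).indicator (fun s => g s * f r) := by
          ext s
          by_cases hsr : s < r
          · simp [hFdef, indicator_of_mem, Set.mem_setOf_eq, Set.mem_Iio, hsr]
          · simp [hFdef, indicator_of_notMem, Set.mem_setOf_eq, Set.mem_Iio, hsr]
        rw [hre, hμ, integral_indicator measurableSet_Iio,
          Measure.restrict_restrict measurableSet_Iio]
        have hset : Iio r ∩ Ioc 0 t = Ioo 0 r := by
          ext s
          simp only [mem_inter_iff, mem_Iio, mem_Ioc, mem_Ioo]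
          constructor
          · rintro ⟨h1, h2, _⟩; exact ⟨h2, h1⟩
          · rintro ⟨h1, h2⟩; exact ⟨h2, h1, (h2.le.trans hr.2)⟩
        rw [hset, integral_mul_const, ← integral_Ioc_eq_integral_Ioo, mul_comm]
    _ = (∫ s in Ioc (0:ℝ) t, f s * ∫ r in Ioc (0:ℝ) s, g r)
        + (∫ s in Ioc (0:ℝ) t, g s * ∫ r in Ioc (0:ℝ) s, f r) := by
        rw [add_comm, hμ]

lemma moment_aux {b : ℝ → ℝ} (hb : Integrable b (volume : Measure ℝ)) (hb0 : ∀ s, 0 ≤ b s) :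
    Monotone (fun s => ∫ r in Ioc (0:ℝ) s, b r) := by
  intro s s' hss
  exact setIntegral_mono_set hb.integrableOn
    (ae_restrict_of_ae (Filter.Eventually.of_forall hb0))
    (HasSubset.Subset.eventuallyLE (Ioc_subset_Ioc_right hss))

lemma moment_int {b : ℝ → ℝ} (hb : Integrable b (volume : Measure ℝ)) (hb0 : ∀ s, 0 ≤ b s)
    (j : ℕ) :
    Integrable (fun s => b s * (∫ r in Ioc (0:ℝ) s, b r) ^ j) (volume : Measure ℝ) := by
  have hmeas : AEStronglyMeasurable (fun s => (∫ r in Ioc (0:ℝ) s, b r) ^ j)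
      (volume : Measure ℝ) :=
    (((moment_aux hb hb0).measurable).pow_const j).aestronglyMeasurable
  have hbd : ∀ s : ℝ, ‖(∫ r in Ioc (0:ℝ) s, b r) ^ j‖ ≤ (∫ r, b r) ^ j := by
    intro s
    rw [norm_pow, Real.norm_eq_abs,
      abs_of_nonneg (setIntegral_nonneg measurableSet_Ioc fun r _ => hb0 r)]
    exact pow_le_pow_left₀ (setIntegral_nonneg measurableSet_Ioc fun r _ => hb0 r)
      (setIntegral_le_integral hb (Filter.Eventually.of_forall hb0)) j
  have := Integrable.bdd_mul hb hmeas (Filter.Eventually.of_forall hbd)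
  exact this.congr (Filter.Eventually.of_forall fun s => mul_comm _ _)

lemma moment {b : ℝ → ℝ} (hb : Integrable b (volume : Measure ℝ)) (hb0 : ∀ s, 0 ≤ b s) :
    ∀ (j : ℕ) (t : ℝ), ∫ s in Ioc (0:ℝ) t, b s * (∫ r in Ioc (0:ℝ) s, b r) ^ j
      = (∫ s in Ioc (0:ℝ) t, b s) ^ (j + 1) / (j + 1) := by
  intro j
  induction j with
  | zero => intro t; simp
  | succ j ih =>
    intro t
    have key := fub' (moment_int hb hb0 j) hb (t := t)
    simp only [ih] at key
    have h1 : ∫ s in Ioc (0:ℝ) t, (b s * (∫ r in Ioc (0:ℝ) s, b r) ^ j)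
          * (∫ r in Ioc (0:ℝ) s, b r)
        = ∫ s in Ioc (0:ℝ) t, b s * (∫ r in Ioc (0:ℝ) s, b r) ^ (j + 1) :=
      integral_congr_ae (Filter.Eventually.of_forall fun s => by ring)
    have h2 : ∫ s in Ioc (0:ℝ) t, b s * ((∫ r in Ioc (0:ℝ) s, b r) ^ (j + 1) / (↑j + 1))
        = (∫ s in Ioc (0:ℝ) t, b s * (∫ r in Ioc (0:ℝ) s, b r) ^ (j + 1)) * ((j:ℝ) + 1)⁻¹ := by
      rw [← integral_mul_const]
      exact integral_congr_ae (Filter.Eventually.of_forall fun s => by ring)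
    rw [h1, h2] at key
    have hj : ((j:ℝ) + 1) ≠ 0 := by positivity
    have hj2 : ((j:ℝ) + 1 + 1) ≠ 0 := by positivity
    set X := ∫ s in Ioc (0:ℝ) t, b s * (∫ r in Ioc (0:ℝ) s, b r) ^ (j + 1) with hX
    set a := ∫ s in Ioc (0:ℝ) t, b s with ha
    push_cast
    rw [eq_div_iff hj2]
    have hpow : a ^ (j + 1) * a = a ^ (j + 1 + 1) := by ring
    field_simp at key
    nlinarith [key]

lemma gron_const {T : ℝ} (hT : (0:ℝ) ≤ T) {u b : ℝ → ℝ} {K : ℝ}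
    (hu : ContinuousOn u (Icc 0 T))
    (hb : Integrable b (volume : Measure ℝ)) (hb0 : ∀ s, 0 ≤ b s)
    (hK : 0 ≤ K)
    (hint : ∀ t ∈ Icc (0:ℝ) T, u t ≤ K + ∫ s in Ioc (0:ℝ) t, b s * u s) :
    u T ≤ K * Real.exp (∫ s in Ioc (0:ℝ) T, b s) := by
  set A : ℝ → ℝ := fun s => ∫ r in Ioc (0:ℝ) s, b r with hA
  have hA0 : ∀ s, 0 ≤ A s := fun s =>
    setIntegral_nonneg measurableSet_Ioc fun r _ => hb0 r
  obtain ⟨C, hC⟩ := (isCompact_Icc (a := (0:ℝ)) (b := T)).exists_bound_of_continuousOn hu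
  have huaesm : ∀ t ∈ Icc (0:ℝ) T, AEStronglyMeasurable u (volume.restrict (Ioc 0 t)) := by
    intro t ht
    have : ContinuousOn u (Icc 0 t) := hu.mono (Icc_subset_Icc le_rfl ht.2)
    exact (this.aestronglyMeasurable measurableSet_Icc).mono_measure
      (Measure.restrict_mono Ioc_subset_Icc_self le_rfl)
  have hbu_int : ∀ t ∈ Icc (0:ℝ) T, IntegrableOn (fun s => b s * u s) (Ioc 0 t) := by
    intro t ht
    have hbd : ∀ᵐ x ∂(volume.restrict (Ioc (0:ℝ) t)), ‖u x‖ ≤ C := by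
      refine (ae_restrict_iff' measurableSet_Ioc).2 (Eventually.of_forall fun x hx => ?_)
      exact hC x ⟨hx.1.le, hx.2.trans ht.2⟩
    have := Integrable.bdd_mul (c := C) hb.integrableOn (huaesm t ht) hbd
    exact this.congr (Eventually.of_forall fun s => mul_comm _ _)
  have hfact : ∀ i : ℕ, ((i+1).factorial : ℝ) = ((i:ℝ) + 1) * (i.factorial : ℝ) := by
    intro i
    rw [Nat.factorial_succ]
    push_cast
    ring
  have hfactpos : ∀ i : ℕ, (0:ℝ) < (i.factorial : ℝ) := by
    intro i; exact_mod_cast i.factorial_pos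
  have main : ∀ n : ℕ, ∀ t ∈ Icc (0:ℝ) T,
      u t ≤ K * (∑ i ∈ Finset.range n, (A t) ^ i / (Nat.factorial i : ℝ))
        + C * ((A t) ^ n / (Nat.factorial n : ℝ)) := by
    intro n
    induction n with
    | zero =>
      intro t ht
      simpa using le_trans (le_abs_self _) (hC t ht)
    | succ n ihn =>
      intro t ht
      -- the comparison function
      set Q : ℝ → ℝ := fun s =>
        (∑ i ∈ Finset.range n, K / (Nat.factorial i : ℝ) * (b s * (A s) ^ i))
          + C / (Nat.factorial n : ℝ) * (b s * (A s) ^ n) with hQ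
      have hQint : IntegrableOn Q (Ioc 0 t) := by
        exact Integrable.add
          (integrable_finset_sum _ fun i _ =>
            ((moment_int hb hb0 i).const_mul _).integrableOn)
          ((moment_int hb hb0 n).const_mul _).integrableOn
      have hpt : ∀ s ∈ Ioc (0:ℝ) t, b s * u s ≤ Q s := by
        intro s hs
        have hs' : s ∈ Icc (0:ℝ) T := ⟨hs.1.le, hs.2.trans ht.2⟩
        have h1 : b s * u s ≤ b s * (K * (∑ i ∈ Finset.range n, (A s) ^ i / (Nat.factorial i : ℝ))
            + C * ((A s) ^ n / (Nat.factorial n : ℝ))) :=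
          mul_le_mul_of_nonneg_left (ihn s hs') (hb0 s)
        refine h1.trans_eq ?_
        rw [hQ, mul_add, Finset.mul_sum, Finset.mul_sum]
        congr 1
        · exact Finset.sum_congr rfl fun i _ => by ring
        · ring
      have hle : ∫ s in Ioc (0:ℝ) t, b s * u s ≤ ∫ s in Ioc (0:ℝ) t, Q s :=
        setIntegral_mono_on (hbu_int t ht) hQint measurableSet_Ioc hpt
      have hQval : ∫ s in Ioc (0:ℝ) t, Q s
          = (∑ i ∈ Finset.range n, K / (Nat.factorial i : ℝ) * ((A t) ^ (i+1) / ((i:ℝ)+1)))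
            + C / (Nat.factorial n : ℝ) * ((A t) ^ (n+1) / ((n:ℝ)+1)) := by
        rw [hQ, integral_add (integrable_finset_sum _ fun i _ =>
            ((moment_int hb hb0 i).const_mul _).integrableOn)
            ((moment_int hb hb0 n).const_mul _).integrableOn,
          integral_finset_sum _ (fun i _ => ((moment_int hb hb0 i).const_mul _).integrableOn)]
        congr 1
        · exact Finset.sum_congr rfl fun i _ => by rw [integral_const_mul, moment hb hb0 i t]
        · rw [integral_const_mul, moment hb hb0 n t]
      have halg : K + ((∑ i ∈ Finset.range n, K / (Nat.factorial i : ℝ) * ((A t) ^ (i+1) / ((i:ℝ)+1)))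
            + C / (Nat.factorial n : ℝ) * ((A t) ^ (n+1) / ((n:ℝ)+1)))
          = K * (∑ i ∈ Finset.range (n+1), (A t) ^ i / (Nat.factorial i : ℝ))
            + C * ((A t) ^ (n+1) / (Nat.factorial (n+1) : ℝ)) := by
        rw [Finset.sum_range_succ', mul_add, Finset.mul_sum]
        have hterm : ∀ i ∈ Finset.range n,
            K * ((A t) ^ (i+1) / (Nat.factorial (i+1) : ℝ))
              = K / (Nat.factorial i : ℝ) * ((A t) ^ (i+1) / ((i:ℝ)+1)) := by
          intro i _
          rw [hfact i, ← div_div]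
          ring
        rw [Finset.sum_congr rfl hterm]
        have hcterm : C * ((A t) ^ (n+1) / (Nat.factorial (n+1) : ℝ))
            = C / (Nat.factorial n : ℝ) * ((A t) ^ (n+1) / ((n:ℝ)+1)) := by
          rw [hfact n, ← div_div]
          ring
        rw [hcterm]
        simp only [Nat.factorial_zero, Nat.cast_one, pow_zero]
        ring
      calc u t ≤ K + ∫ s in Ioc (0:ℝ) t, b s * u s := hint t ht
        _ ≤ K + ∫ s in Ioc (0:ℝ) t, Q s := by linarith
        _ = _ := by rw [hQval, halg]
  have hTmem : T ∈ Icc (0:ℝ) T := ⟨hT, le_rfl⟩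
  have hsum : ∀ n : ℕ, u T ≤ K * Real.exp (A T) + C * ((A T) ^ n / (Nat.factorial n : ℝ)) := by
    intro n
    refine (main n T hTmem).trans (add_le_add ?_ le_rfl)
    exact mul_le_mul_of_nonneg_left (Real.sum_le_exp_of_nonneg (hA0 T) n) hK
  have hlim : Tendsto (fun n : ℕ => K * Real.exp (A T) + C * ((A T) ^ n / (Nat.factorial n : ℝ)))
      atTop (𝓝 (K * Real.exp (A T) + C * 0)) :=
    tendsto_const_nhds.add ((FloorSemiring.tendsto_pow_div_factorial_atTop (A T)).const_mul C)
  have hfin := ge_of_tendsto' hlim hsum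
  simpa using hfin


end GronwallAux

open Set Filter Topology in
/-- Grönwall-type inequality with a square-integrable multiplicative coefficient
(used in the proof of the uniform compactness of the operators `K_ε`).
Absolute continuity of `Λ` on compact subintervals of `[0,∞)` is encoded through the
existence of an a.e. derivative `Λ'` which is locally integrable and for which the
fundamental theorem of calculus representation holds. -/
theorem gronwall_type_inequality_square_integrable_coefficient
    (ω k M : ℝ) (hω : 0 < ω) (hk : 0 ≤ k) (hM : 0 ≤ M)
    (Λ Λ' h : ℝ → ℝ)
    (hΛnonneg : ∀ t, 0 ≤ t → 0 ≤ Λ t)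
    (hΛ'int : ∀ t, 0 ≤ t → IntervalIntegrable Λ' volume 0 t)
    (hΛderiv : ∀ᵐ t ∂(volume.restrict (Set.Ici (0:ℝ))), HasDerivAt Λ (Λ' t) t)
    (hΛFTC : ∀ t, 0 ≤ t → Λ t = Λ 0 + ∫ s in (0:ℝ)..t, Λ' s)
    (hhnonneg : ∀ t, 0 ≤ t → 0 ≤ h t)
    (hhmeas : Measurable h)
    (hhint : IntegrableOn (fun τ => (h τ) ^ 2) (Set.Ici (0:ℝ)) volume)
    (hhM : (∫ τ in Set.Ici (0:ℝ), (h τ) ^ 2) ≤ M)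
    (hineq : ∀ᵐ t ∂(volume.restrict (Set.Ici (0:ℝ))),
      Λ' t + ω * Λ t ≤ h t * Λ t + k) :
    ∀ t, 0 ≤ t →
      Λ t ≤ Λ 0 * Real.exp (M / (2 * ω)) * Real.exp (-ω * t / 2)
        + (2 * k / ω) * Real.exp (M / (2 * ω)) := by
  intro t ht
  have h2ω : (0:ℝ) < 2 * ω := by linarith
  have hq : (0:ℝ) ≤ 2 * k / ω := by positivity
  -- the coefficient function
  set b : ℝ → ℝ := (Ioc (0:ℝ) t).indicator (fun s => h s ^ 2 / (2 * ω)) with hbdef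
  have hb0 : ∀ s, 0 ≤ b s := by
    intro s
    by_cases hs : s ∈ Ioc (0:ℝ) t
    · rw [hbdef, indicator_of_mem hs]; positivity
    · rw [hbdef, indicator_of_notMem hs]
  have hbint : Integrable b (volume : Measure ℝ) := by
    rw [hbdef, integrable_indicator_iff measurableSet_Ioc]
    exact (hhint.mono_set (fun x hx => hx.1.le)).div_const _
  -- continuity of Λ on compact intervals
  have hΛcont : ∀ T : ℝ, 0 ≤ T → ContinuousOn Λ (Icc 0 T) := by
    intro T hT
    have hint' : IntegrableOn Λ' (Icc 0 T) := by
      rw [integrableOn_Icc_iff_integrableOn_Ioc]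
      exact (intervalIntegrable_iff_integrableOn_Ioc_of_le hT).1 (hΛ'int T hT)
    have hcont : ContinuousOn (fun x => Λ 0 + ∫ s in Ioc (0:ℝ) x, Λ' s) (Icc 0 T) :=
      continuousOn_const.add (intervalIntegral.continuousOn_primitive hint')
    refine ContinuousOn.congr hcont ?_
    intro x hx
    rw [hΛFTC x hx.1, intervalIntegral.integral_of_le hx.1]
  -- u
  set u : ℝ → ℝ := fun s => Λ s * Real.exp (ω * s / 2) with hudef
  have hecont : Continuous (fun s : ℝ => Real.exp (ω * s / 2)) :=
    Real.continuous_exp.comp ((continuous_const.mul continuous_id).div_const 2)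
  have hucont : ContinuousOn u (Icc 0 t) :=
    (hΛcont t ht).mul hecont.continuousOn
  -- FTC for the exponential weight
  have hexpFTC : ∀ τ : ℝ, 0 ≤ τ → ∫ s in Ioc (0:ℝ) τ, ω / 2 * Real.exp (ω * s / 2)
      = Real.exp (ω * τ / 2) - 1 := by
    intro τ hτ
    rw [← intervalIntegral.integral_of_le hτ]
    have hd : ∀ x ∈ uIcc (0:ℝ) τ,
        HasDerivAt (fun s => Real.exp (ω * s / 2)) (ω / 2 * Real.exp (ω * x / 2)) x := by
      intro x _
      have h1 : HasDerivAt (fun s : ℝ => ω * s / 2) (ω / 2) x := by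
        simpa using ((hasDerivAt_id x).const_mul ω).div_const 2
      have := (Real.hasDerivAt_exp (ω * x / 2)).comp x h1
      simpa [mul_comm, Function.comp_def] using this
    have hci : IntervalIntegrable (fun x => ω / 2 * Real.exp (ω * x / 2)) volume 0 τ :=
      (continuous_const.mul hecont).intervalIntegrable 0 τ
    rw [intervalIntegral.integral_eq_sub_of_hasDerivAt hd hci]
    norm_num
  -- FTC for Λ in set-integral form
  have hΛIoc : ∀ τ : ℝ, 0 ≤ τ → ∫ s in Ioc (0:ℝ) τ, Λ' s = Λ τ - Λ 0 := by
    intro τ hτ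
    have h1 := hΛFTC τ hτ
    rw [intervalIntegral.integral_of_le hτ] at h1
    linarith
  -- integrability facts
  have hΛ'on : ∀ τ : ℝ, 0 ≤ τ → IntegrableOn Λ' (Ioc 0 τ) :=
    fun τ hτ => (intervalIntegrable_iff_integrableOn_Ioc_of_le hτ).1 (hΛ'int τ hτ)
  have hI1 : ∀ τ : ℝ, 0 ≤ τ →
      IntegrableOn (fun s => Λ' s * Real.exp (ω * s / 2)) (Ioc 0 τ) := by
    intro τ hτ
    have hbd : ∀ᵐ s ∂(volume.restrict (Ioc (0:ℝ) τ)),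
        ‖Real.exp (ω * s / 2)‖ ≤ Real.exp (ω * τ / 2) := by
      refine (ae_restrict_iff' measurableSet_Ioc).2 (Eventually.of_forall fun s hs => ?_)
      rw [Real.norm_eq_abs, abs_of_pos (Real.exp_pos _)]
      exact Real.exp_le_exp.2 (by nlinarith [hs.2, hω.le])
    have := Integrable.bdd_mul (hΛ'on τ hτ) hecont.aestronglyMeasurable.restrict hbd
    exact this.congr (Eventually.of_forall fun s => mul_comm _ _)
  have hI2 : ∀ τ : ℝ, 0 ≤ τ →
      IntegrableOn (fun s => ω / 2 * Λ s * Real.exp (ω * s / 2)) (Ioc 0 τ) := by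
    intro τ hτ
    have hcon : ContinuousOn (fun s => ω / 2 * Λ s * Real.exp (ω * s / 2)) (Icc 0 τ) :=
      (continuousOn_const.mul (hΛcont τ hτ)).mul hecont.continuousOn
    exact hcon.integrableOn_Icc.mono_set Ioc_subset_Icc_self
  have hIexp : ∀ τ : ℝ, IntegrableOn (fun s => ω / 2 * Real.exp (ω * s / 2)) (Ioc 0 τ) :=
    fun τ => (continuous_const.mul hecont).integrableOn_Ioc
  -- integration by parts identity
  have hIBP : ∀ τ : ℝ, 0 ≤ τ →
      Λ τ * Real.exp (ω * τ / 2) - Λ 0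
        = ∫ s in Ioc (0:ℝ) τ, (Λ' s + ω / 2 * Λ s) * Real.exp (ω * s / 2) := by
    intro τ hτ
    set f : ℝ → ℝ := (Ioc (0:ℝ) τ).indicator Λ' with hfdef
    set g : ℝ → ℝ := (Ioc (0:ℝ) τ).indicator (fun s => ω / 2 * Real.exp (ω * s / 2)) with hgdef
    have hfint : Integrable f (volume : Measure ℝ) := by
      rw [hfdef, integrable_indicator_iff measurableSet_Ioc]
      exact hΛ'on τ hτ
    have hgint : Integrable g (volume : Measure ℝ) := by
      rw [hgdef, integrable_indicator_iff measurableSet_Ioc]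
      exact (continuous_const.mul hecont).integrableOn_Ioc
    have hfval : ∀ s : ℝ, 0 ≤ s → s ≤ τ → ∫ r in Ioc (0:ℝ) s, f r = Λ s - Λ 0 := by
      intro s hs0 hsτ
      have hsub : Ioc (0:ℝ) s ⊆ Ioc (0:ℝ) τ := Ioc_subset_Ioc le_rfl hsτ
      rw [setIntegral_congr_fun measurableSet_Ioc
        (fun r hr => indicator_of_mem (hsub hr) Λ')]
      exact hΛIoc s hs0
    have hgval : ∀ s : ℝ, 0 ≤ s → s ≤ τ →
        ∫ r in Ioc (0:ℝ) s, g r = Real.exp (ω * s / 2) - 1 := by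
      intro s hs0 hsτ
      have hsub : Ioc (0:ℝ) s ⊆ Ioc (0:ℝ) τ := Ioc_subset_Ioc le_rfl hsτ
      rw [setIntegral_congr_fun measurableSet_Ioc
        (fun r hr => indicator_of_mem (hsub hr) _)]
      exact hexpFTC s hs0
    have key := fub' (t := τ) hfint hgint
    rw [hfval τ hτ le_rfl, hgval τ hτ le_rfl] at key
    have hT1 : ∫ s in Ioc (0:ℝ) τ, f s * ∫ r in Ioc (0:ℝ) s, g r
        = ∫ s in Ioc (0:ℝ) τ, Λ' s * (Real.exp (ω * s / 2) - 1) := by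
      refine setIntegral_congr_fun measurableSet_Ioc fun s hs => ?_
      rw [hgval s hs.1.le hs.2, hfdef, indicator_of_mem hs]
    have hT2 : ∫ s in Ioc (0:ℝ) τ, g s * ∫ r in Ioc (0:ℝ) s, f r
        = ∫ s in Ioc (0:ℝ) τ, (ω / 2 * Real.exp (ω * s / 2)) * (Λ s - Λ 0) := by
      refine setIntegral_congr_fun measurableSet_Ioc fun s hs => ?_
      rw [hfval s hs.1.le hs.2, hgdef, indicator_of_mem hs]
    rw [hT1, hT2] at key
    have e1 : ∫ s in Ioc (0:ℝ) τ, Λ' s * (Real.exp (ω * s / 2) - 1)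
        = (∫ s in Ioc (0:ℝ) τ, Λ' s * Real.exp (ω * s / 2)) - (Λ τ - Λ 0) := by
      rw [← hΛIoc τ hτ, ← integral_sub (hI1 τ hτ) (hΛ'on τ hτ)]
      exact integral_congr_ae (Eventually.of_forall fun s => by ring)
    have e2 : ∫ s in Ioc (0:ℝ) τ, (ω / 2 * Real.exp (ω * s / 2)) * (Λ s - Λ 0)
        = (∫ s in Ioc (0:ℝ) τ, ω / 2 * Λ s * Real.exp (ω * s / 2))
          - Λ 0 * (Real.exp (ω * τ / 2) - 1) := by
      rw [← hexpFTC τ hτ, ← integral_const_mul (Λ 0), ← integral_sub (hI2 τ hτ)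
        ((hIexp τ).const_mul (Λ 0))]
      exact integral_congr_ae (Eventually.of_forall fun s => by ring)
    have e3 : ∫ s in Ioc (0:ℝ) τ, (Λ' s + ω / 2 * Λ s) * Real.exp (ω * s / 2)
        = (∫ s in Ioc (0:ℝ) τ, Λ' s * Real.exp (ω * s / 2))
          + ∫ s in Ioc (0:ℝ) τ, ω / 2 * Λ s * Real.exp (ω * s / 2) := by
      rw [← integral_add (hI1 τ hτ) (hI2 τ hτ)]
      exact integral_congr_ae (Eventually.of_forall fun s => by ring)
    rw [e1, e2] at key
    rw [e3]
    linear_combination key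
  -- integrability of b * u
  have hbu_int : ∀ τ : ℝ, τ ∈ Icc (0:ℝ) t → IntegrableOn (fun s => b s * u s) (Ioc 0 τ) := by
    intro τ hτ
    obtain ⟨C, hC⟩ :=
      (isCompact_Icc (a := (0:ℝ)) (b := t)).exists_bound_of_continuousOn hucont
    have huaesm : AEStronglyMeasurable u (volume.restrict (Ioc 0 τ)) :=
      ((hucont.mono (Icc_subset_Icc le_rfl hτ.2)).aestronglyMeasurable
        measurableSet_Icc).mono_measure (Measure.restrict_mono Ioc_subset_Icc_self le_rfl)
    have hbd : ∀ᵐ s ∂(volume.restrict (Ioc (0:ℝ) τ)), ‖u s‖ ≤ C :=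
      (ae_restrict_iff' measurableSet_Ioc).2
        (Eventually.of_forall fun s hs => hC s ⟨hs.1.le, hs.2.trans hτ.2⟩)
    exact (Integrable.bdd_mul hbint.integrableOn huaesm hbd).congr
      (Eventually.of_forall fun s => mul_comm _ _)
  -- the integral inequality
  have hmain : ∀ τ ∈ Icc (0:ℝ) t,
      u τ ≤ (Λ 0 + 2 * k / ω * (Real.exp (ω * t / 2) - 1))
        + ∫ s in Ioc (0:ℝ) τ, b s * u s := by
    intro τ hτ
    have hcmp : ∀ᵐ s ∂(volume.restrict (Ioc (0:ℝ) τ)),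
        (Λ' s + ω / 2 * Λ s) * Real.exp (ω * s / 2)
          ≤ b s * u s + k * Real.exp (ω * s / 2) := by
      have h1 := ae_restrict_of_ae_restrict_of_subset
        (fun x (hx : x ∈ Ioc (0:ℝ) τ) => (hx.1.le : x ∈ Ici (0:ℝ))) hineq
      have h2 : ∀ᵐ s ∂(volume.restrict (Ioc (0:ℝ) τ)), s ∈ Ioc (0:ℝ) τ :=
        (ae_restrict_iff' measurableSet_Ioc).2 (Eventually.of_forall fun s hs => hs)
      filter_upwards [h1, h2] with s hs1 hs2
      have hΛs := hΛnonneg s hs2.1.le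
      have hepos := Real.exp_pos (ω * s / 2)
      have hbs : b s = h s ^ 2 / (2 * ω) := by
        have hsub : Ioc (0:ℝ) τ ⊆ Ioc (0:ℝ) t := Ioc_subset_Ioc le_rfl hτ.2
        rw [hbdef]
        exact indicator_of_mem (hsub hs2) _
      have hc0 : h s - ω / 2 ≤ h s ^ 2 / (2 * ω) := by
        rw [le_div_iff₀ h2ω]
        nlinarith [sq_nonneg (h s - ω)]
      have hstep : Λ' s + ω / 2 * Λ s ≤ h s ^ 2 / (2 * ω) * Λ s + k := by
        nlinarith [mul_le_mul_of_nonneg_right hc0 hΛs]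
      calc (Λ' s + ω / 2 * Λ s) * Real.exp (ω * s / 2)
          ≤ (h s ^ 2 / (2 * ω) * Λ s + k) * Real.exp (ω * s / 2) :=
            mul_le_mul_of_nonneg_right hstep hepos.le
        _ = b s * u s + k * Real.exp (ω * s / 2) := by
            rw [hbs]; simp only [hudef]; ring
    have hRint : IntegrableOn (fun s => b s * u s + k * Real.exp (ω * s / 2)) (Ioc 0 τ) :=
      (hbu_int τ hτ).add (continuous_const.mul hecont).integrableOn_Ioc
    have hLint : IntegrableOn
        (fun s => (Λ' s + ω / 2 * Λ s) * Real.exp (ω * s / 2)) (Ioc 0 τ) := by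
      have := (hI1 τ hτ.1).add (hI2 τ hτ.1)
      exact this.congr (Eventually.of_forall fun s => by
        simp only [Pi.add_apply]; ring)
    have hmono := integral_mono_ae hLint hRint hcmp
    have hsplit : ∫ s in Ioc (0:ℝ) τ, (b s * u s + k * Real.exp (ω * s / 2))
        = (∫ s in Ioc (0:ℝ) τ, b s * u s)
          + k * (2 / ω) * (Real.exp (ω * τ / 2) - 1) := by
      rw [integral_add (hbu_int τ hτ) (show IntegrableOn (fun s => k * Real.exp (ω * s / 2)) (Ioc 0 τ) volume from
        (continuous_const.mul hecont).integrableOn_Ioc)]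
      congr 1
      rw [← hexpFTC τ hτ.1, ← integral_const_mul]
      refine integral_congr_ae (Eventually.of_forall fun s => ?_)
      field_simp
    have hIBPτ := hIBP τ hτ.1
    have huτ : u τ = Λ τ * Real.exp (ω * τ / 2) := rfl
    have hEτ : Real.exp (ω * τ / 2) ≤ Real.exp (ω * t / 2) :=
      Real.exp_le_exp.2 (by nlinarith [hτ.2, hω.le])
    have hcmono : k * (2 / ω) * (Real.exp (ω * τ / 2) - 1)
        ≤ 2 * k / ω * (Real.exp (ω * t / 2) - 1) := by
      have hkk : k * (2 / ω) = 2 * k / ω := by ring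
      rw [hkk]
      exact mul_le_mul_of_nonneg_left (by linarith) hq
    rw [hsplit] at hmono
    rw [huτ]
    linarith
  -- Grönwall
  have hK0 : 0 ≤ Λ 0 + 2 * k / ω * (Real.exp (ω * t / 2) - 1) := by
    have h1 : (1:ℝ) ≤ Real.exp (ω * t / 2) := Real.one_le_exp (by positivity)
    have h0 := hΛnonneg 0 le_rfl
    nlinarith
  have hgron := gron_const ht hucont hbint hb0 hK0 hmain
  have hAb : ∫ s in Ioc (0:ℝ) t, b s ≤ M / (2 * ω) := by
    have h1 : ∫ s in Ioc (0:ℝ) t, b s = (∫ s in Ioc (0:ℝ) t, h s ^ 2) / (2 * ω) := by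
      rw [← integral_div]
      exact setIntegral_congr_fun measurableSet_Ioc fun s hs => by
        rw [hbdef, indicator_of_mem hs]
    have h2 : ∫ s in Ioc (0:ℝ) t, h s ^ 2 ≤ ∫ s in Ici (0:ℝ), h s ^ 2 :=
      setIntegral_mono_set hhint
        (ae_restrict_of_ae (Eventually.of_forall fun s => sq_nonneg (h s)))
        (HasSubset.Subset.eventuallyLE (fun x hx => le_of_lt hx.1))
    rw [h1]
    gcongr
    exact h2.trans hhM
  have hEM : Real.exp (∫ s in Ioc (0:ℝ) t, b s) ≤ Real.exp (M / (2 * ω)) :=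
    Real.exp_le_exp.2 hAb
  have hut : u t ≤ (Λ 0 + 2 * k / ω * (Real.exp (ω * t / 2) - 1))
      * Real.exp (M / (2 * ω)) :=
    hgron.trans (mul_le_mul_of_nonneg_left hEM hK0)
  have hsum0 : ω * t / 2 + -ω * t / 2 = 0 := by ring
  have hE1 : Real.exp (ω * t / 2) * Real.exp (-ω * t / 2) = 1 := by
    rw [← Real.exp_add, hsum0, Real.exp_zero]
  have hem0 : (0:ℝ) < Real.exp (-ω * t / 2) := Real.exp_pos _
  have hfin : u t * Real.exp (-ω * t / 2)
      ≤ (Λ 0 + 2 * k / ω * (Real.exp (ω * t / 2) - 1))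
        * Real.exp (M / (2 * ω)) * Real.exp (-ω * t / 2) :=
    mul_le_mul_of_nonneg_right hut hem0.le
  have hΛt : Λ t = u t * Real.exp (-ω * t / 2) := by
    simp only [hudef]
    rw [mul_assoc, hE1, mul_one]
  have hexpand : (Λ 0 + 2 * k / ω * (Real.exp (ω * t / 2) - 1))
        * Real.exp (M / (2 * ω)) * Real.exp (-ω * t / 2)
      = Λ 0 * Real.exp (M / (2 * ω)) * Real.exp (-ω * t / 2)
        + 2 * k / ω * Real.exp (M / (2 * ω))
          * (Real.exp (ω * t / 2) * Real.exp (-ω * t / 2))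
        - 2 * k / ω * Real.exp (M / (2 * ω)) * Real.exp (-ω * t / 2) := by ring
  rw [hE1, mul_one] at hexpand
  have hnn : 0 ≤ 2 * k / ω * Real.exp (M / (2 * ω)) * Real.exp (-ω * t / 2) := by positivity
  rw [hΛt]
  linarith
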